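/- arXiv:2203.11395 — 3 statements merged into one kernel-verified Lean document; each statement's English description precedes it below -/
import Mathlib

section
/- Let D ⊆ ℝ² be a Borel measurable convex set, let x ∈ ℝ² with x ∉ D, let r > 0, and let b be an admissible radial kernel of radius r. Then ∫_{ℝ²} b(x − y) 1_D(y) dy ≤ 1/2. -/
noncomputable section

open MeasureTheory

local notation "ℝ²" => EuclideanSpace ℝ (Fin 2)

/-- An admissible radial kernel of radius `r`: nonnegative, radial (of the form
`ρ ∘ ‖·‖` for measurable `ρ`), vanishing for `‖y‖ ≥ r`, with total integral 1. -/
def IsAdmissibleRadialKernel (r : ℝ) (b : ℝ² → ℝ) : Prop :=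
  (∀ y, 0 ≤ b y) ∧
  (∃ ρ : ℝ → ℝ, Measurable ρ ∧ (∀ s, 0 ≤ s → 0 ≤ ρ s) ∧ ∀ y, b y = ρ ‖y‖) ∧
  (∀ y, r ≤ ‖y‖ → b y = 0) ∧
  (∫ y, b y = 1)

/-- Multiplying by the indicator of `1` is the same as taking the indicator of the function. -/
lemma mul_indicator_one_eq (g : ℝ² → ℝ) (S : Set ℝ²) :
    (fun y => g y * S.indicator 1 y) = S.indicator g := by
  funext y
  by_cases h : y ∈ S <;> simp [Set.indicator_apply, h]

/-- Half the mass of an even integrable nonneg function with integral 1 lies in any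
half-plane through the origin determined by a nonzero functional. -/
lemma half_mass (f : ℝ² →L[ℝ] ℝ) (hf : f ≠ 0) (b : ℝ² → ℝ) (hbm : Measurable b)
    (hbnn : ∀ y, 0 ≤ b y) (heven : ∀ z, b (-z) = b z) (hint : Integrable b)
    (hb1 : ∫ y, b y = 1) :
    (∫ z, Set.indicator {z : ℝ² | 0 ≤ f z} b z) = 1 / 2 := by
  set K : Set ℝ² := {z | 0 ≤ f z} with hK
  set K' : Set ℝ² := {z | f z ≤ 0} with hK'
  have measK : MeasurableSet K := (isClosed_le continuous_const f.continuous).measurableSet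
  have measK' : MeasurableSet K' := (isClosed_le f.continuous continuous_const).measurableSet
  have hintK : Integrable (K.indicator b) := hint.indicator measK
  have hintK' : Integrable (K'.indicator b) := hint.indicator measK'
  -- the two half-planes carry equal mass, by evenness
  have hBC : (∫ z, K.indicator b z) = ∫ z, K'.indicator b z := by
    rw [← integral_neg_eq_self (K.indicator b) volume]
    congr 1
    funext z
    have hmem : -z ∈ K ↔ z ∈ K' := by
      simp [hK, hK', neg_nonneg]
    by_cases h : z ∈ K'
    · rw [Set.indicator_of_mem (hmem.mpr h), Set.indicator_of_mem h, heven]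
    · rw [Set.indicator_of_notMem (fun hh => h (hmem.mp hh)), Set.indicator_of_notMem h]
  -- the kernel of `f` is a null set
  have hker : volume {z : ℝ² | f z = 0} = 0 := by
    have hne : LinearMap.ker (f : ℝ² →ₗ[ℝ] ℝ) ≠ ⊤ := by
      intro h
      apply hf
      ext z
      have : z ∈ LinearMap.ker (f : ℝ² →ₗ[ℝ] ℝ) := by rw [h]; trivial
      simpa using this
    have hsetK : {z : ℝ² | f z = 0} = (LinearMap.ker (f : ℝ² →ₗ[ℝ] ℝ) : Set ℝ²) := by
      ext z; simp [LinearMap.mem_ker]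
    rw [hsetK]
    exact Measure.addHaar_submodule (volume : Measure ℝ²) (LinearMap.ker (f : ℝ² →ₗ[ℝ] ℝ)) hne
  have hL0 : (∫ z, Set.indicator {z : ℝ² | f z = 0} b z) = 0 := by
    apply integral_eq_zero_of_ae
    have h1 : ∀ᵐ z : ℝ², z ∉ {z : ℝ² | f z = 0} := by
      rw [ae_iff]
      simpa using hker
    filter_upwards [h1] with z hz
    simp only [Pi.zero_apply]
    exact Set.indicator_of_notMem (s := {z : ℝ² | f z = 0}) hz b
  -- the two half-plane masses sum to 1
  have hsum : (∫ z, K.indicator b z) + (∫ z, K'.indicator b z) = 1 := by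
    rw [← integral_add hintK hintK']
    have : (fun z => K.indicator b z + K'.indicator b z)
        = fun z => b z + Set.indicator {z : ℝ² | f z = 0} b z := by
      funext z
      rcases lt_trichotomy (f z) 0 with h | h | h
      · simp [Set.indicator_apply, hK, hK', not_le.mpr h, h.le, h.ne]
      · simp [Set.indicator_apply, hK, hK', h.le, h.ge, h]
      · simp [Set.indicator_apply, hK, hK', not_le.mpr h, h.le, h.ne']
    rw [this, integral_add hint
      (hint.indicator ((isClosed_eq f.continuous continuous_const).measurableSet)),
      hb1, hL0, add_zero]
  linarith [hBC, hsum]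

theorem convolution_le_half_of_convex_of_not_mem (D : Set ℝ²)
    (hDmeas : MeasurableSet D) (hDconv : Convex ℝ D)
    (x : ℝ²) (hx : x ∉ D) (r : ℝ) (hr : 0 < r)
    (b : ℝ² → ℝ) (hb : IsAdmissibleRadialKernel r b) :
    (∫ y, b (x - y) * D.indicator 1 y) ≤ 1 / 2 := by
  obtain ⟨hbnn, ⟨ρ, hρm, hρnn, hρeq⟩, hbsupp, hb1⟩ := hb
  have hbm : Measurable b := by
    have : b = fun y => ρ ‖y‖ := funext hρeq
    rw [this]
    exact hρm.comp measurable_norm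
  have heven : ∀ z : ℝ², b (-z) = b z := by
    intro z; rw [hρeq, hρeq, norm_neg]
  have hint : Integrable b := by
    by_contra h
    rw [integral_undef h] at hb1
    norm_num at hb1
  rw [mul_indicator_one_eq (fun y => b (x - y)) D]
  by_cases hintD : (interior D).Nonempty
  · -- separating half-plane case
    obtain ⟨a, ha⟩ := hintD
    obtain ⟨f, hf⟩ := geometric_hahn_banach_open_point hDconv.interior isOpen_interior
      (fun h => hx (interior_subset h))
    have hfa : f a < f x := hf a ha
    have hfne : f ≠ 0 := by
      intro h0
      rw [h0] at hfa
      simp at hfa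
    -- every point of D satisfies f y ≤ f x
    have hDle : ∀ y ∈ D, f y ≤ f x := by
      intro y hy
      have hcomb : ∀ t : ℝ, t ∈ Set.Ioo (0 : ℝ) 1 →
          t * f a + (1 - t) * f y ≤ f x := by
        intro t ht
        have hmem : t • a + (1 - t) • y ∈ interior D :=
          hDconv.combo_interior_self_mem_interior ha hy ht.1 (by linarith [ht.2])
            (by ring)
        have := hf _ hmem
        simpa [map_add, _root_.map_smul, smul_eq_mul] using this.le
      have htend : Filter.Tendsto (fun t : ℝ => t * f a + (1 - t) * f y)
          (nhdsWithin 0 (Set.Ioo (0 : ℝ) 1)) (nhds (f y)) := by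
        have hc : Continuous fun t : ℝ => t * f a + (1 - t) * f y := by continuity
        have := hc.tendsto 0
        simp only [zero_mul, sub_zero, one_mul, zero_add] at this
        exact this.mono_left nhdsWithin_le_nhds
      have hnb : (nhdsWithin (0 : ℝ) (Set.Ioo (0 : ℝ) 1)).NeBot := by
        apply mem_closure_iff_nhdsWithin_neBot.mp
        rw [closure_Ioo one_ne_zero.symm]
        exact ⟨le_refl 0, zero_le_one⟩
      exact le_of_tendsto htend (Filter.eventually_of_mem self_mem_nhdsWithin hcomb)
    set H : Set ℝ² := {y | f y ≤ f x} with hH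
    have measH : MeasurableSet H := (isClosed_le f.continuous continuous_const).measurableSet
    have hDH : D ⊆ H := fun y hy => hDle y hy
    set K : Set ℝ² := {z : ℝ² | 0 ≤ f z} with hKdef
    -- key: translate
    have hGtrans : ∀ y : ℝ², H.indicator (fun y => b (x - y)) y = K.indicator b (x - y) := by
      intro y
      have hmem : x - y ∈ K ↔ y ∈ H := by
        simp [hKdef, hH, map_sub, sub_nonneg]
      by_cases h : y ∈ H
      · rw [Set.indicator_of_mem h, Set.indicator_of_mem (hmem.mpr h)]
      · rw [Set.indicator_of_notMem h, Set.indicator_of_notMem (fun hh => h (hmem.mp hh))]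
    have hintH : Integrable (H.indicator fun y => b (x - y)) := by
      have h1 : Integrable (fun y : ℝ² => b (x - y)) := hint.comp_sub_left x
      exact h1.indicator measH
    have hmono : (∫ y, D.indicator (fun y => b (x - y)) y)
        ≤ ∫ y, H.indicator (fun y => b (x - y)) y := by
      apply integral_mono_of_nonneg
      · filter_upwards with y
        exact Set.indicator_nonneg (fun y _ => hbnn _) y
      · exact hintH
      · filter_upwards with y
        exact Set.indicator_le_indicator_of_subset hDH (fun y => hbnn _) y
    have heq : (∫ y, H.indicator (fun y => b (x - y)) y) = ∫ z, K.indicator b z := by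
      calc (∫ y, H.indicator (fun y => b (x - y)) y)
          = ∫ y, K.indicator b (x - y) := by
            congr 1; funext y; exact hGtrans y
        _ = ∫ z, K.indicator b z := integral_sub_left_eq_self (K.indicator b) volume x
    have hhalf := half_mass f hfne b hbm hbnn heven hint hb1
    rw [heq] at hmono
    calc (∫ y, D.indicator (fun y => b (x - y)) y) ≤ ∫ z, K.indicator b z := hmono
      _ = 1 / 2 := hhalf
  · -- degenerate case: D has empty interior, hence measure zero
    rw [Set.not_nonempty_iff_eq_empty] at hintD
    have hD0 : volume D = 0 := by
      apply measure_mono_null _ (hDconv.addHaar_frontier volume)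
      intro y hy
      rw [frontier, hintD, Set.diff_empty]
      exact subset_closure hy
    have : (∫ y, D.indicator (fun y => b (x - y)) y) = 0 := by
      apply integral_eq_zero_of_ae
      have h1 : ∀ᵐ y : ℝ², y ∉ D := by
        rw [ae_iff]; simpa using hD0
      filter_upwards [h1] with y hy
      simp [Set.indicator_of_notMem hy]
    rw [this]
    norm_num
end
end

section
/- Let D ⊆ ℝ² be a Borel measurable convex set, let x ∈ ℝ² with x ∉ D, and let s > 0. Then the Lebesgue measure of the set {θ ∈ [0, 2π) : x + s·(cos θ, sin θ) ∈ D} is at most π; that is, the circle of radius s centered at x meets D in at most half of its angular measure. -/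
noncomputable section

open MeasureTheory Real

local notation "ℝ²" => EuclideanSpace ℝ (Fin 2)

/-- The point on the circle of radius `s` centered at `x` at angle `θ`. -/
def circlePt (x : ℝ²) (s θ : ℝ) : ℝ² :=
  x + s • (EuclideanSpace.equiv (Fin 2) ℝ).symm ![Real.cos θ, Real.sin θ]

open Pointwise

lemma null_zero_set (a b : ℝ) (hab : ¬ (a = 0 ∧ b = 0)) :
    volume {θ : ℝ | a * Real.cos θ + b * Real.sin θ = 0} = 0 := by
  set z : ℂ := Complex.mk a b with hz
  have hre : z.re = a := rfl
  have him : z.im = b := rfl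
  have hz0 : z ≠ 0 := by
    intro h
    exact hab ⟨by rw [← hre, h, Complex.zero_re], by rw [← him, h, Complex.zero_im]⟩
  have hr : (0:ℝ) < ‖z‖ := norm_pos_iff.mpr hz0
  set φ := Complex.arg z with hφ
  have hca : Real.cos φ = a / ‖z‖ := by rw [← hre]; exact Complex.cos_arg hz0
  have hsa : Real.sin φ = b / ‖z‖ := by rw [← him]; exact Complex.sin_arg z
  have key : ∀ θ : ℝ, a * Real.cos θ + b * Real.sin θ
      = ‖z‖ * Real.cos (θ - φ) := by
    intro θ
    rw [Real.cos_sub, hca, hsa]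
    field_simp
  have hsub : {θ : ℝ | a * Real.cos θ + b * Real.sin θ = 0}
      ⊆ Set.range (fun k : ℤ => φ + (2 * k + 1) * π / 2) := by
    intro θ hθ
    simp only [Set.mem_setOf_eq, key θ, mul_eq_zero] at hθ
    rcases hθ with h | h
    · exact absurd h hr.ne'
    · obtain ⟨k, hk⟩ := Real.cos_eq_zero_iff.mp h
      exact ⟨k, by push_cast; linarith⟩
  exact measure_mono_null hsub ((Set.countable_range _).measure_zero _)

lemma half_measure (a b : ℝ) (hab : ¬ (a = 0 ∧ b = 0)) :
    volume {θ : ℝ | θ ∈ Set.Ico 0 (2 * π) ∧ 0 ≤ a * Real.cos θ + b * Real.sin θ}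
      ≤ ENNReal.ofReal π := by
  set g : ℝ → ℝ := fun θ => a * Real.cos θ + b * Real.sin θ with hg
  have hgc : Continuous g := by fun_prop
  have hflip : ∀ θ : ℝ, g (π + θ) = - g θ := by
    intro θ; simp [hg, Real.cos_add, Real.sin_add]; ring
  set S₁ : Set ℝ := {θ | θ ∈ Set.Ico 0 π ∧ 0 < g θ} with hS₁
  set S₂ : Set ℝ := {θ | θ ∈ Set.Ico π (2*π) ∧ 0 < g θ} with hS₂
  have hmeas₂ : MeasurableSet S₂ := by
    have : S₂ = Set.Ico π (2*π) ∩ g ⁻¹' (Set.Ioi 0) := by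
      ext θ; simp [hS₂, Set.mem_setOf_eq, and_comm]
    rw [this]
    exact measurableSet_Ico.inter (hgc.measurable measurableSet_Ioi)
  have hdisj : Disjoint (π +ᵥ S₁) S₂ := by
    rw [Set.disjoint_left]
    rintro θ ⟨θ', ⟨_, hg'⟩, rfl⟩ ⟨_, hg2⟩
    have := hflip θ'
    simp only [vadd_eq_add] at hg2
    linarith
  have hsub12 : (π +ᵥ S₁) ∪ S₂ ⊆ Set.Ico π (2*π) := by
    rintro θ (⟨θ', ⟨⟨h0, h1⟩, _⟩, rfl⟩ | ⟨h, _⟩)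
    · simp only [vadd_eq_add, Set.mem_Ico]; constructor <;> linarith
    · exact h
  have hvol : volume S₁ + volume S₂ ≤ ENNReal.ofReal π := by
    have h1 : volume (π +ᵥ S₁) = volume S₁ := measure_vadd _ _ _
    calc volume S₁ + volume S₂ = volume ((π +ᵥ S₁) ∪ S₂) := by
          rw [measure_union hdisj hmeas₂, h1]
      _ ≤ volume (Set.Ico π (2*π)) := measure_mono hsub12
      _ = ENNReal.ofReal π := by rw [Real.volume_Ico]; ring_nf
  have hsplit : {θ : ℝ | θ ∈ Set.Ico 0 (2 * π) ∧ 0 ≤ g θ}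
      ⊆ S₁ ∪ S₂ ∪ {θ | g θ = 0} := by
    rintro θ ⟨⟨h0, h2⟩, hge⟩
    rcases eq_or_lt_of_le hge with h | h
    · exact Or.inr h.symm
    · rcases lt_or_ge θ π with hlt | hle
      · exact Or.inl (Or.inl ⟨⟨h0, hlt⟩, h⟩)
      · exact Or.inl (Or.inr ⟨⟨hle, h2⟩, h⟩)
  calc volume {θ : ℝ | θ ∈ Set.Ico 0 (2 * π) ∧ 0 ≤ g θ}
      ≤ volume (S₁ ∪ S₂ ∪ {θ | g θ = 0}) := measure_mono hsplit
    _ ≤ volume (S₁ ∪ S₂) + volume {θ | g θ = 0} := measure_union_le _ _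
    _ = volume (S₁ ∪ S₂) := by rw [null_zero_set a b hab, add_zero]
    _ ≤ volume S₁ + volume S₂ := measure_union_le _ _
    _ ≤ ENNReal.ofReal π := hvol

lemma exists_sep (D : Set ℝ²) (hD : Convex ℝ D) (hne : D.Nonempty)
    (x : ℝ²) (hx : x ∉ D) :
    ∃ w : ℝ², w ≠ 0 ∧ ∀ y ∈ D, inner ℝ w x ≤ (inner ℝ w y : ℝ) := by
  rcases Set.eq_empty_or_nonempty (interior D) with hint | ⟨b₀, hb₀⟩
  · -- flat case
    obtain ⟨p₀, hp₀⟩ := id hne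
    have hspan : affineSpan ℝ D ≠ ⊤ := by
      intro h
      rw [← hD.interior_nonempty_iff_affineSpan_eq_top] at h
      exact h.ne_empty hint
    set V := (affineSpan ℝ D).direction with hV
    have hVne : V ≠ ⊤ := by
      intro h
      exact hspan ((AffineSubspace.direction_eq_top_iff_of_nonempty
        (hne.affineSpan (k := ℝ))).mp h)
    have hVorth : Vᗮ ≠ ⊥ := fun h => hVne (Submodule.orthogonal_eq_bot_iff.mp h)
    obtain ⟨w, hwV, hw0⟩ := Submodule.exists_mem_ne_zero_of_ne_bot hVorth
    have hconst : ∀ y ∈ D, (inner ℝ w y : ℝ) = inner ℝ w p₀ := by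
      intro y hy
      have hdir : y - p₀ ∈ V :=
        AffineSubspace.vsub_mem_direction (subset_affineSpan ℝ D hy)
          (subset_affineSpan ℝ D hp₀)
      have : (inner ℝ w (y - p₀) : ℝ) = 0 := by
        rw [real_inner_comm]
        exact (Submodule.mem_orthogonal V w).mp hwV _ hdir
      rw [inner_sub_right] at this
      linarith
    by_cases hc : (inner ℝ w x : ℝ) ≤ inner ℝ w p₀
    · exact ⟨w, hw0, fun y hy => by rw [hconst y hy]; exact hc⟩
    · refine ⟨-w, neg_ne_zero.mpr hw0, fun y hy => ?_⟩
      rw [inner_neg_left, inner_neg_left, hconst y hy]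
      linarith
  · -- interior nonempty
    obtain ⟨f, hf⟩ := geometric_hahn_banach_point_open hD.interior isOpen_interior
      (fun h => hx (interior_subset h))
    set w : ℝ² := (InnerProductSpace.toDual ℝ ℝ²).symm f with hw
    have hwy : ∀ y : ℝ², (inner ℝ w y : ℝ) = f y := fun y =>
      InnerProductSpace.toDual_symm_apply
    have hw0 : w ≠ 0 := by
      intro h
      have hfb := hf b₀ hb₀
      have : f b₀ = 0 ∧ f x = 0 := by
        constructor <;> rw [← hwy, h] <;> simp
      rw [this.1, this.2] at hfb; exact lt_irrefl 0 hfb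
    refine ⟨w, hw0, fun y hy => ?_⟩
    rw [hwy, hwy]
    -- f x ≤ f y for y ∈ D via limit of combos with b₀
    have hlim : Filter.Tendsto (fun t : ℝ => f (t • b₀ + (1 - t) • y))
        (nhdsWithin 0 (Set.Ioi 0)) (nhds (f y)) := by
      have hc : Continuous (fun t : ℝ => f (t • b₀ + (1 - t) • y)) := by fun_prop
      have := hc.tendsto 0
      simp only [zero_smul, sub_zero, one_smul, zero_add] at this
      exact this.mono_left nhdsWithin_le_nhds
    refine ge_of_tendsto hlim ?_
    filter_upwards [Ioo_mem_nhdsGT_of_mem (Set.mem_Ico.mpr ⟨le_refl 0, one_pos⟩)]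
      with t ⟨ht0, ht1⟩
    exact (hf _ (hD.combo_interior_closure_mem_interior hb₀ (subset_closure hy)
      ht0 (by linarith) (by ring))).le

theorem circle_angular_measure_le_pi_of_convex_of_not_mem (D : Set ℝ²)
    (hDmeas : MeasurableSet D) (hDconv : Convex ℝ D)
    (x : ℝ²) (hx : x ∉ D) (s : ℝ) (hs : 0 < s) :
    volume {θ : ℝ | θ ∈ Set.Ico 0 (2 * π) ∧ circlePt x s θ ∈ D}
      ≤ ENNReal.ofReal π := by
  rcases Set.eq_empty_or_nonempty D with rfl | hne
  · simp
  obtain ⟨w, hw0, hsep⟩ := exists_sep D hDconv hne x hx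
  have hab : ¬ (w 0 = 0 ∧ w 1 = 0) := by
    rintro ⟨h0, h1⟩
    apply hw0
    ext i
    fin_cases i <;> simpa [h0, h1]
  have hinner : ∀ θ : ℝ, (inner ℝ w (circlePt x s θ) : ℝ)
      = inner ℝ w x + s * (w 0 * Real.cos θ + w 1 * Real.sin θ) := by
    intro θ
    rw [circlePt, inner_add_right, real_inner_smul_right]
    congr 1
    have : (inner ℝ w ((EuclideanSpace.equiv (Fin 2) ℝ).symm ![Real.cos θ, Real.sin θ]) : ℝ)
        = w 0 * Real.cos θ + w 1 * Real.sin θ := by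
      simp [PiLp.inner_apply, Fin.sum_univ_two, EuclideanSpace.equiv]; ring
    rw [this]
  have hsubset : {θ : ℝ | θ ∈ Set.Ico 0 (2 * π) ∧ circlePt x s θ ∈ D}
      ⊆ {θ : ℝ | θ ∈ Set.Ico 0 (2 * π) ∧ 0 ≤ w 0 * Real.cos θ + w 1 * Real.sin θ} := by
    rintro θ ⟨hθ, hmem⟩
    refine ⟨hθ, ?_⟩
    have h := hsep _ hmem
    rw [hinner θ] at h
    nlinarith
  exact le_trans (measure_mono hsubset) (half_measure (w 0) (w 1) hab)
end
end

section
/- Let D ⊆ ℝ² be a Borel measurable set, x ∈ ℝ², and r > 0. Then the following are equivalent: (a) for every admissible radial kernel b of radius r, ∫_{ℝ²} b(x − y) 1_D(y) dy ≤ 1/2; (b) for almost every s ∈ (0, r), the Lebesgue measure of {θ ∈ [0, 2π) : x + s·(cos θ, sin θ) ∈ D} is at most π. -/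
noncomputable section

open MeasureTheory Real

local notation "ℝ²" => EuclideanSpace ℝ (Fin 2)

/-! ### Auxiliary lemmas -/

open Set Pointwise

theorem RadialAux.lintegral_comp_polarCoord_symm' (g : ℝ × ℝ → ENNReal) :
    (∫⁻ p in polarCoord.target, ENNReal.ofReal p.1 * g (polarCoord.symm p)) = ∫⁻ p, g p := by
  set B : ℝ × ℝ → ℝ × ℝ →L[ℝ] ℝ × ℝ := fun p =>
    LinearMap.toContinuousLinearMap (Matrix.toLin (Module.Basis.finTwoProd ℝ) (Module.Basis.finTwoProd ℝ)
      !![cos p.2, -p.1 * sin p.2; sin p.2, p.1 * cos p.2])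
  have A : ∀ p ∈ polarCoord.target, HasFDerivWithinAt polarCoord.symm (B p) polarCoord.target p :=
    fun p _ => (hasFDerivAt_polarCoord_symm p).hasFDerivWithinAt
  have B_det : ∀ p, (B p).det = p.1 := by
    intro p
    conv_rhs => rw [← one_mul p.1, ← cos_sq_add_sin_sq p.2]
    simp only [B, neg_mul, LinearMap.det_toContinuousLinearMap, LinearMap.det_toLin,
      Matrix.det_fin_two_of, sub_neg_eq_add]
    ring
  symm
  calc
    ∫⁻ p, g p = ∫⁻ p in polarCoord.source, g p := by
      rw [← setLIntegral_univ]
      exact (setLIntegral_congr polarCoord_source_ae_eq_univ.symm)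
    _ = ∫⁻ p in polarCoord.symm '' polarCoord.target, g p := by
      rw [polarCoord.symm_image_target_eq_source]
    _ = ∫⁻ p in polarCoord.target, ENNReal.ofReal |(B p).det| * g (polarCoord.symm p) :=
      lintegral_image_eq_lintegral_abs_det_fderiv_mul volume
        polarCoord.open_target.measurableSet A polarCoord.symm.injOn g
    _ = ∫⁻ p in polarCoord.target, ENNReal.ofReal p.1 * g (polarCoord.symm p) := by
      apply setLIntegral_congr_fun polarCoord.open_target.measurableSet
      exact fun p hp => by rw [B_det, abs_of_pos hp.1]

theorem RadialAux.periodic_measure_eq (S : Set ℝ) (hS : MeasurableSet S)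
    (hper : ∀ θ : ℝ, θ + 2 * π ∈ S ↔ θ ∈ S) :
    volume (S ∩ Ioo (-π) π) = volume (S ∩ Ico 0 (2 * π)) := by
  have hpi : (0:ℝ) < π := pi_pos
  have e1 : volume (S ∩ Ioo (-π) π) = volume (S ∩ Ico (-π) π) :=
    measure_congr (ae_eq_set_inter (Filter.EventuallyEq.refl _ _) Ioo_ae_eq_Ico)
  have split1 : S ∩ Ico (-π) π = (S ∩ Ico (-π) 0) ∪ (S ∩ Ico 0 π) := by
    rw [← inter_union_distrib_left, Ico_union_Ico_eq_Ico (by linarith) (by linarith)]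
  have split2 : S ∩ Ico 0 (2*π) = (S ∩ Ico 0 π) ∪ (S ∩ Ico π (2*π)) := by
    rw [← inter_union_distrib_left, Ico_union_Ico_eq_Ico (by linarith) (by linarith)]
  have key : volume (S ∩ Ico (-π) 0) = volume (S ∩ Ico π (2*π)) := by
    have him : (2*π) +ᵥ (S ∩ Ico (-π) 0) = S ∩ Ico π (2*π) := by
      ext z
      simp only [Set.mem_vadd_set_iff_neg_vadd_mem, vadd_eq_add, mem_inter_iff, mem_Ico]
      constructor
      · rintro ⟨hz, h1, h2⟩
        have hz' := (hper (-(2*π)+z)).mpr hz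
        rw [show (-(2*π)+z) + 2*π = z by ring] at hz'
        exact ⟨hz', by linarith, by linarith⟩
      · rintro ⟨hz, h1, h2⟩
        exact ⟨(hper (-(2*π)+z)).mp (by rw [show (-(2*π) + z) + 2*π = z by ring]; exact hz),
          by linarith, by linarith⟩
    rw [← him, measure_vadd]
  have hd1 : Disjoint (S ∩ Ico (-π) 0) (S ∩ Ico 0 π) :=
    Set.Ico_disjoint_Ico_same.mono inter_subset_right inter_subset_right
  have hd2 : Disjoint (S ∩ Ico 0 π) (S ∩ Ico π (2*π)) :=
    Set.Ico_disjoint_Ico_same.mono inter_subset_right inter_subset_right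
  rw [e1, split1, split2, measure_union hd1 (hS.inter measurableSet_Ico),
    measure_union hd2 (hS.inter measurableSet_Ico), key, add_comm]

namespace RadialAux

def E2 : ℝ² ≃ᵐ ℝ × ℝ :=
  (MeasurableEquiv.toLp 2 (Fin 2 → ℝ)).symm.trans (MeasurableEquiv.finTwoArrow)

theorem E2_mp : MeasurePreserving E2 volume volume :=
  (volume_preserving_finTwoArrow ℝ).comp (EuclideanSpace.volume_preserving_symm_measurableEquiv_toLp (Fin 2))

theorem E2_symm_apply (p : ℝ × ℝ) :
    E2.symm p = (EuclideanSpace.equiv (Fin 2) ℝ).symm ![p.1, p.2] := by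
  ext i; fin_cases i <;> rfl

theorem norm_E2 (a b : ℝ) : ‖(EuclideanSpace.equiv (Fin 2) ℝ).symm ![a, b]‖ = √(a^2 + b^2) := by
  rw [EuclideanSpace.norm_eq]; simp [Fin.sum_univ_two, sq]

theorem circlePt_eq (x : ℝ²) (s θ : ℝ) :
    circlePt x s θ = x + (EuclideanSpace.equiv (Fin 2) ℝ).symm ![s * Real.cos θ, s * Real.sin θ] := by
  unfold circlePt
  congr 1
  rw [← _root_.map_smul]
  congr 1
  simp [Matrix.smul_cons, smul_eq_mul]

theorem measurable_circlePt (x : ℝ²) : Measurable (fun p : ℝ × ℝ => circlePt x p.1 p.2) := by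
  have : Continuous (fun p : ℝ × ℝ => circlePt x p.1 p.2) := by
    simp only [circlePt_eq]
    refine continuous_const.add ((EuclideanSpace.equiv (Fin 2) ℝ).symm.continuous.comp ?_)
    apply continuous_pi
    intro i
    fin_cases i
    · simpa [Pi.mul_def] using continuous_fst.mul (Real.continuous_cos.comp continuous_snd)
    · simpa [Pi.mul_def] using continuous_fst.mul (Real.continuous_sin.comp continuous_snd)
  exact this.measurable

theorem circlePt_periodic (x : ℝ²) (s θ : ℝ) : circlePt x s (θ + 2 * π) = circlePt x s θ := by
  simp [circlePt, Real.cos_add_two_pi, Real.sin_add_two_pi]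

/-- The angular measure of the part of the circle of radius `s` lying in `D`. -/
def angF (D : Set ℝ²) (x : ℝ²) (s : ℝ) : ENNReal :=
  volume {θ : ℝ | θ ∈ Set.Ico 0 (2 * π) ∧ circlePt x s θ ∈ D}

theorem angF_le (D : Set ℝ²) (x : ℝ²) (s : ℝ) : angF D x s ≤ ENNReal.ofReal (2 * π) := by
  have : {θ : ℝ | θ ∈ Set.Ico 0 (2 * π) ∧ circlePt x s θ ∈ D} ⊆ Ico 0 (2*π) :=
    fun θ hθ => hθ.1
  calc angF D x s ≤ volume (Ico 0 (2*π)) := measure_mono this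
    _ = ENNReal.ofReal (2*π) := by rw [Real.volume_Ico, sub_zero]

theorem angF_univ (x : ℝ²) (s : ℝ) : angF univ x s = ENNReal.ofReal (2 * π) := by
  unfold angF
  rw [show {θ : ℝ | θ ∈ Set.Ico 0 (2 * π) ∧ circlePt x s θ ∈ univ} = Ico 0 (2*π) by
    ext θ; simp]
  rw [Real.volume_Ico, sub_zero]

theorem angF_measurable (D : Set ℝ²) (hD : MeasurableSet D) (x : ℝ²) :
    Measurable (angF D x) := by
  have hU : MeasurableSet {p : ℝ × ℝ | p.2 ∈ Set.Ico 0 (2*π) ∧ circlePt x p.1 p.2 ∈ D} :=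
    (measurable_snd measurableSet_Ico).inter ((measurable_circlePt x) hD)
  exact measurable_measure_prodMk_left hU

theorem master (D : Set ℝ²) (hD : MeasurableSet D) (x : ℝ²)
    (P : ℝ → ENNReal) (hP : Measurable P) :
    ∫⁻ y : ℝ², P ‖x - y‖ * D.indicator 1 y
      = ∫⁻ s in Ioi (0:ℝ), ENNReal.ofReal s * P s * angF D x s := by
  have hDind : Measurable (D.indicator (1 : ℝ² → ENNReal)) :=
    measurable_one.indicator hD
  have hC : MeasurableSet {q : ℝ × ℝ | circlePt x q.1 q.2 ∈ D} :=
    (measurable_circlePt x) hD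
  have hW : ∀ s : ℝ, MeasurableSet {θ : ℝ | circlePt x s θ ∈ D} := fun s =>
    ((measurable_circlePt x).comp (measurable_const.prodMk measurable_id)) hD
  have step1 : ∫⁻ y : ℝ², P ‖x - y‖ * D.indicator 1 y
      = ∫⁻ y : ℝ², P ‖y‖ * D.indicator 1 (x + y) := by
    rw [← lintegral_add_left_eq_self (fun y => P ‖x - y‖ * D.indicator 1 y) x]
    congr 1; funext y
    rw [show x - (x + y) = -y by abel, norm_neg]
  have hg : Measurable fun y : ℝ² => P ‖y‖ * D.indicator 1 (x + y) :=
    (hP.comp measurable_norm).mul (hDind.comp (measurable_const.add measurable_id))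
  have step2 : ∫⁻ y : ℝ², P ‖y‖ * D.indicator 1 (x + y)
      = ∫⁻ p : ℝ × ℝ, P ‖E2.symm p‖ * D.indicator 1 (x + E2.symm p) :=
    ((MeasurePreserving.symm E2 E2_mp).lintegral_comp hg).symm
  have step3 : ∫⁻ p : ℝ × ℝ, P ‖E2.symm p‖ * D.indicator 1 (x + E2.symm p)
      = ∫⁻ p in polarCoord.target,
          ENNReal.ofReal p.1 * P p.1 *
            Set.indicator {q : ℝ × ℝ | circlePt x q.1 q.2 ∈ D} 1 p := by
    rw [← lintegral_comp_polarCoord_symm' (fun p => P ‖E2.symm p‖ * D.indicator 1 (x + E2.symm p))]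
    apply setLIntegral_congr_fun polarCoord.open_target.measurableSet
    rintro ⟨s, θ⟩ hs
    have hs1 : (0:ℝ) < s := hs.1
    dsimp only
    rw [show polarCoord.symm (s, θ) = (s * cos θ, s * sin θ) from rfl]
    rw [E2_symm_apply, norm_E2]
    have hnorm : √((s * cos θ)^2 + (s * sin θ)^2) = s := by
      rw [show (s * cos θ)^2 + (s * sin θ)^2 = s^2 * ((cos θ)^2 + (sin θ)^2) by ring,
        cos_sq_add_sin_sq, mul_one]
      exact Real.sqrt_sq hs1.le
    rw [hnorm, mul_assoc]
    congr 1
    congr 1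
    simp only [Set.indicator_apply, Set.mem_setOf_eq, ← circlePt_eq, Pi.one_apply]
    rfl
  rw [step1, step2, step3]
  have htarget : polarCoord.target = Ioi (0:ℝ) ×ˢ Ioo (-π) π := rfl
  have hH : Measurable fun p : ℝ × ℝ =>
      ENNReal.ofReal p.1 * P p.1 * Set.indicator {q : ℝ × ℝ | circlePt x q.1 q.2 ∈ D} 1 p :=
    ((ENNReal.measurable_ofReal.comp measurable_fst).mul (hP.comp measurable_fst)).mul
      (measurable_one.indicator hC)
  rw [htarget, Measure.volume_eq_prod, ← Measure.prod_restrict, lintegral_prod _ hH.aemeasurable]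
  apply lintegral_congr_ae
  apply Filter.Eventually.of_forall
  intro s
  have : ∀ θ : ℝ, Set.indicator {q : ℝ × ℝ | circlePt x q.1 q.2 ∈ D} (1 : ℝ × ℝ → ENNReal) (s, θ)
      = Set.indicator {θ : ℝ | circlePt x s θ ∈ D} 1 θ := fun θ => rfl
  simp only [this]
  rw [lintegral_const_mul _ (measurable_one.indicator (hW s)),
    lintegral_indicator (hW s)]
  simp only [Pi.one_apply]
  rw [setLIntegral_one, Measure.restrict_apply (hW s)]
  congr 1
  rw [periodic_measure_eq _ (hW s) (fun θ => by simp [circlePt_periodic])]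
  unfold angF
  congr 1
  ext θ
  simp [mem_inter_iff, and_comm]

/-- Real-integral version of the master formula. -/
theorem real_master (D : Set ℝ²) (hD : MeasurableSet D) (x : ℝ²)
    (ρ : ℝ → ℝ) (hρ : Measurable ρ) (hnn : ∀ z : ℝ², 0 ≤ ρ ‖z‖) :
    ∫ y : ℝ², ρ ‖x - y‖ * D.indicator 1 y
      = (∫⁻ s in Ioi (0:ℝ), ENNReal.ofReal s * ENNReal.ofReal (ρ s) * angF D x s).toReal := by
  have hmeas : Measurable fun y : ℝ² => ρ ‖x - y‖ * D.indicator 1 y :=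
    (hρ.comp ((measurable_const.sub measurable_id).norm)).mul ((measurable_one).indicator hD)
  have hnn' : 0 ≤ᵐ[volume] fun y : ℝ² => ρ ‖x - y‖ * D.indicator 1 y := by
    apply Filter.Eventually.of_forall
    intro y
    exact mul_nonneg (hnn (x - y)) (Set.indicator_nonneg (fun _ _ => zero_le_one) y)
  rw [integral_eq_lintegral_of_nonneg_ae hnn' hmeas.aestronglyMeasurable]
  congr 1
  rw [← master D hD x (fun s => ENNReal.ofReal (ρ s)) (ENNReal.measurable_ofReal.comp hρ)]
  congr 1
  funext y
  rw [ENNReal.ofReal_mul (hnn (x - y))]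
  congr 1
  by_cases hy : y ∈ D <;> simp [hy]

end RadialAux

open RadialAux

theorem kernel_bound_iff_ae_circle_bound (D : Set ℝ²) (hDmeas : MeasurableSet D)
    (x : ℝ²) (r : ℝ) (hr : 0 < r) :
    (∀ b : ℝ² → ℝ, IsAdmissibleRadialKernel r b →
        (∫ y, b (x - y) * D.indicator 1 y) ≤ 1 / 2) ↔
      (∀ᵐ s ∂(volume.restrict (Set.Ioo 0 r)),
        volume {θ : ℝ | θ ∈ Set.Ico 0 (2 * π) ∧ circlePt x s θ ∈ D}
          ≤ ENNReal.ofReal π) := by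
  have hπ : (0:ℝ) < π := pi_pos
  have hFm : Measurable (angF D x) := angF_measurable D hDmeas x
  constructor
  · -- kernel bound → a.e. angular bound
    intro hker
    by_contra hae
    -- extract a bad set of positive measure
    have hae' : ¬ (∀ᵐ s ∂(volume.restrict (Set.Ioo 0 r)), angF D x s ≤ ENNReal.ofReal π) := hae
    rw [ae_iff] at hae'
    have hmeas1 : MeasurableSet {s : ℝ | ENNReal.ofReal π < angF D x s} :=
      hFm measurableSet_Ioi
    have hseteq : {s : ℝ | ¬ angF D x s ≤ ENNReal.ofReal π}
        = {s : ℝ | ENNReal.ofReal π < angF D x s} := by ext s; simp [not_le]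
    rw [hseteq, Measure.restrict_apply hmeas1] at hae'
    set A := {s : ℝ | ENNReal.ofReal π < angF D x s} ∩ Ioo 0 r with hA
    have hAmeas : MeasurableSet A := hmeas1.inter measurableSet_Ioo
    have hAsub : A ⊆ Ioo 0 r := inter_subset_right
    set m := volume A with hm
    have hm0 : m ≠ 0 := hae'
    have hmtop : m ≠ ⊤ := by
      refine ne_top_of_le_ne_top ?_ (measure_mono hAsub)
      rw [Real.volume_Ioo]; exact ENNReal.ofReal_ne_top
    set mr := m.toReal with hmr'
    have hmr : 0 < mr := ENNReal.toReal_pos hm0 hmtop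
    set c := (2 * π * mr)⁻¹ with hc
    have hcpos : 0 < c := by positivity
    set ρ := fun s : ℝ => if s ∈ A then c / s else 0 with hρ
    have hρm : Measurable ρ :=
      Measurable.ite hAmeas (measurable_const.div measurable_id) measurable_const
    have hρnn : ∀ s : ℝ, 0 ≤ ρ s := by
      intro s
      rw [hρ]
      dsimp only
      split
      · next hsA => exact div_nonneg hcpos.le (hAsub hsA).1.le
      · exact le_refl 0
    set b := fun y : ℝ² => ρ ‖y‖ with hb
    have hnn : ∀ z : ℝ², 0 ≤ ρ ‖z‖ := fun z => hρnn _
    have hAIoi : A ⊆ Ioi (0:ℝ) := fun s hs => (hAsub hs).1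
    have hcalc : ∀ G : ℝ → ENNReal, Measurable G →
        (∫⁻ s in Ioi (0:ℝ), ENNReal.ofReal s * ENNReal.ofReal (ρ s) * G s)
          = ENNReal.ofReal c * ∫⁻ s in A, G s := by
      intro G hG
      have heq : ∀ s ∈ Ioi (0:ℝ), ENNReal.ofReal s * ENNReal.ofReal (ρ s) * G s
          = A.indicator (fun s => ENNReal.ofReal c * G s) s := by
        intro s hs
        by_cases hsA : s ∈ A
        · rw [Set.indicator_of_mem hsA, hρ]
          dsimp only
          rw [if_pos hsA, ← ENNReal.ofReal_mul (le_of_lt hs), mul_comm s (c / s),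
            div_mul_cancel₀ _ (ne_of_gt (hs : (0:ℝ) < s))]
        · rw [Set.indicator_of_notMem hsA, hρ]
          dsimp only
          rw [if_neg hsA]
          simp
      rw [setLIntegral_congr_fun measurableSet_Ioi heq,
        lintegral_indicator hAmeas, Measure.restrict_restrict hAmeas,
        Set.inter_eq_left.mpr hAIoi, lintegral_const_mul _ hG]
    have hofc : ENNReal.ofReal c * (ENNReal.ofReal (2*π) * m) = 1 := by
      rw [← ENNReal.ofReal_toReal hmtop, ← hmr',
        ← ENNReal.ofReal_mul (by positivity : (0:ℝ) ≤ 2*π),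
        ← ENNReal.ofReal_mul hcpos.le,
        show c * (2*π*mr) = 1 from inv_mul_cancel₀ (by positivity), ENNReal.ofReal_one]
    have hN : (∫⁻ s in Ioi (0:ℝ),
        ENNReal.ofReal s * ENNReal.ofReal (ρ s) * ENNReal.ofReal (2*π)) = 1 := by
      rw [hcalc _ measurable_const, setLIntegral_const, hofc]
    have hbint : ∫ y : ℝ², b y = 1 := by
      have h0 := real_master Set.univ MeasurableSet.univ 0 ρ hρm hnn
      simp_rw [zero_sub, norm_neg, Set.indicator_univ, Pi.one_apply, mul_one] at h0
      have h1 : ∫⁻ s in Ioi (0:ℝ),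
          ENNReal.ofReal s * ENNReal.ofReal (ρ s) * angF Set.univ 0 s
          = ∫⁻ s in Ioi (0:ℝ),
          ENNReal.ofReal s * ENNReal.ofReal (ρ s) * ENNReal.ofReal (2*π) :=
        lintegral_congr fun s => by rw [angF_univ]
      rw [h1, hN] at h0
      simpa using h0
    have hbadm : IsAdmissibleRadialKernel r b := by
      refine ⟨fun y => hρnn _, ⟨ρ, hρm, fun s _ => hρnn s, fun y => rfl⟩, ?_, hbint⟩
      intro y hy
      show ρ ‖y‖ = 0
      rw [hρ]
      dsimp only
      rw [if_neg]
      intro hmem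
      exact absurd (hAsub hmem).2 (not_lt.mpr hy)
    have hbound := hker b hbadm
    have hconv : (∫ y, b (x - y) * D.indicator 1 y)
        = (ENNReal.ofReal c * ∫⁻ s in A, angF D x s).toReal := by
      rw [show (∫ y, b (x - y) * D.indicator 1 y)
          = ∫ y, ρ ‖x - y‖ * D.indicator 1 y from rfl,
        real_master D hDmeas x ρ hρm hnn, hcalc _ hFm]
    rw [hconv] at hbound
    set I := ∫⁻ s in A, angF D x s with hI
    have hIub : I ≤ ENNReal.ofReal (2*π) * m := by
      calc I ≤ ∫⁻ _ in A, ENNReal.ofReal (2*π) :=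
            setLIntegral_mono' hAmeas (fun s _ => angF_le D x s)
        _ = ENNReal.ofReal (2*π) * m := by rw [setLIntegral_const]
    have hcover : A ⊆ ⋃ n : ℕ, {s | s ∈ A ∧ ENNReal.ofReal π + (n:ENNReal)⁻¹ ≤ angF D x s} := by
      intro s hsA
      have hlt : ENNReal.ofReal π < angF D x s := hsA.1
      have hd0 : angF D x s - ENNReal.ofReal π ≠ 0 := (tsub_pos_of_lt hlt).ne'
      obtain ⟨n, hn⟩ := ENNReal.exists_inv_nat_lt hd0
      refine Set.mem_iUnion.mpr ⟨n, hsA, ?_⟩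
      have h2 : ENNReal.ofReal π + (n:ENNReal)⁻¹
          ≤ ENNReal.ofReal π + (angF D x s - ENNReal.ofReal π) := add_le_add (le_refl _) hn.le
      rwa [add_tsub_cancel_of_le hlt.le] at h2
    have hex : ∃ n : ℕ,
        volume {s | s ∈ A ∧ ENNReal.ofReal π + (n:ENNReal)⁻¹ ≤ angF D x s} ≠ 0 := by
      by_contra h
      push_neg at h
      exact hm0 (measure_mono_null hcover (measure_iUnion_null h))
    obtain ⟨n, hBn⟩ := hex
    set B := {s | s ∈ A ∧ ENNReal.ofReal π + (n:ENNReal)⁻¹ ≤ angF D x s} with hB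
    have hBmeas : MeasurableSet B :=
      hAmeas.inter (hFm measurableSet_Ici)
    have hBsub : B ⊆ A := fun s hs => hs.1
    have hsplit : volume B + volume (A \ B) = m := by
      rw [← measure_union disjoint_sdiff_right (hAmeas.diff hBmeas), Set.union_diff_cancel hBsub]
    have hlow : ENNReal.ofReal π * m + (n:ENNReal)⁻¹ * volume B ≤ I := by
      have hunion : I = (∫⁻ s in B, angF D x s) + ∫⁻ s in A \ B, angF D x s := by
        rw [hI, ← lintegral_union (hAmeas.diff hBmeas) disjoint_sdiff_right,
          Set.union_diff_cancel hBsub]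
      rw [hunion]
      have h1 : (ENNReal.ofReal π + (n:ENNReal)⁻¹) * volume B ≤ ∫⁻ s in B, angF D x s := by
        rw [show (ENNReal.ofReal π + (n:ENNReal)⁻¹) * volume B
            = ∫⁻ _ in B, (ENNReal.ofReal π + (n:ENNReal)⁻¹) from (setLIntegral_const _ _).symm]
        exact setLIntegral_mono' hBmeas fun s hs => hs.2
      have h2 : ENNReal.ofReal π * volume (A \ B) ≤ ∫⁻ s in A \ B, angF D x s := by
        rw [show ENNReal.ofReal π * volume (A \ B)
            = ∫⁻ _ in A \ B, ENNReal.ofReal π from (setLIntegral_const _ _).symm]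
        exact setLIntegral_mono' (hAmeas.diff hBmeas) fun s hs => (hs.1.1 :
          ENNReal.ofReal π < angF D x s).le
      calc ENNReal.ofReal π * m + (n:ENNReal)⁻¹ * volume B
          = (ENNReal.ofReal π + (n:ENNReal)⁻¹) * volume B
            + ENNReal.ofReal π * volume (A \ B) := by rw [← hsplit]; ring
        _ ≤ _ := add_le_add h1 h2
    have hstrict : ENNReal.ofReal π * m < I := by
      refine lt_of_lt_of_le ?_ hlow
      refine ENNReal.lt_add_right (ENNReal.mul_ne_top ENNReal.ofReal_ne_top hmtop) ?_
      exact mul_ne_zero (ENNReal.inv_ne_zero.mpr (ENNReal.natCast_ne_top n)) hBn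
    have hc0' : ENNReal.ofReal c ≠ 0 := by
      simp only [ne_eq, ENNReal.ofReal_eq_zero, not_le]
      exact hcpos
    have hLstrict : ENNReal.ofReal c * (ENNReal.ofReal π * m) < ENNReal.ofReal c * I :=
      by rw [mul_comm _ (ENNReal.ofReal π * m), mul_comm _ I]
         exact ENNReal.mul_lt_mul_left hc0' ENNReal.ofReal_ne_top hstrict
    have hhalf : ENNReal.ofReal c * (ENNReal.ofReal π * m) = ENNReal.ofReal (1/2) := by
      rw [← ENNReal.ofReal_toReal hmtop, ← hmr', ← ENNReal.ofReal_mul pi_pos.le,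
        ← ENNReal.ofReal_mul hcpos.le]
      congr 1
      rw [hc]
      field_simp
    have hLtop : ENNReal.ofReal c * I ≠ ⊤ := by
      refine ne_top_of_le_ne_top ?_ (mul_le_mul_right hIub _)
      exact ENNReal.mul_ne_top ENNReal.ofReal_ne_top
        (ENNReal.mul_ne_top ENNReal.ofReal_ne_top hmtop)
    have hfin : 1/2 < (ENNReal.ofReal c * I).toReal := by
      rw [← ENNReal.toReal_ofReal (by norm_num : (0:ℝ) ≤ 1/2)]
      exact ENNReal.toReal_strict_mono hLtop (hhalf ▸ hLstrict)
    linarith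

  · -- a.e. angular bound → kernel bound
    intro hae b hb
    obtain ⟨hb0, ⟨ρ, hρm, hρnn, hρrep⟩, hbvan, hbint⟩ := hb
    have hnn : ∀ z : ℝ², 0 ≤ ρ ‖z‖ := fun z => by rw [← hρrep]; exact hb0 z
    have hvan : ∀ s : ℝ, r ≤ s → ρ s = 0 := by
      intro s hs
      have hs0 : 0 ≤ s := le_trans hr.le hs
      have hnorm : ‖(EuclideanSpace.equiv (Fin 2) ℝ).symm ![s, (0:ℝ)]‖ = s := by
        rw [norm_E2]
        rw [show s^2 + (0:ℝ)^2 = s^2 by ring]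
        exact Real.sqrt_sq hs0
      have := hbvan ((EuclideanSpace.equiv (Fin 2) ℝ).symm ![s, (0:ℝ)]) (by rw [hnorm]; exact hs)
      rwa [hρrep, hnorm] at this
    -- normalization in ℝ≥0∞
    have key0 : ∫ y : ℝ², ρ ‖(0:ℝ²) - y‖ * (Set.univ : Set ℝ²).indicator 1 y = 1 := by
      simp_rw [zero_sub, norm_neg, Set.indicator_univ, Pi.one_apply, mul_one, ← hρrep]
      exact hbint
    rw [real_master Set.univ MeasurableSet.univ 0 ρ hρm hnn] at key0
    have hang_univ : ∫⁻ s in Ioi (0:ℝ),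
        ENNReal.ofReal s * ENNReal.ofReal (ρ s) * angF Set.univ 0 s
        = ∫⁻ s in Ioi (0:ℝ),
        ENNReal.ofReal s * ENNReal.ofReal (ρ s) * ENNReal.ofReal (2*π) :=
      lintegral_congr fun s => by rw [angF_univ]
    rw [hang_univ] at key0
    set N := ∫⁻ s in Ioi (0:ℝ),
        ENNReal.ofReal s * ENNReal.ofReal (ρ s) * ENNReal.ofReal (2*π) with hN
    have hNtop : N ≠ ⊤ := by
      intro h
      rw [h] at key0
      simp at key0
    have hN1 : N = 1 := by
      rw [← ENNReal.ofReal_toReal hNtop, key0, ENNReal.ofReal_one]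
    -- main estimate
    have hint_eq : (∫ y, b (x - y) * D.indicator 1 y)
        = ∫ y, ρ ‖x - y‖ * D.indicator 1 y := by simp_rw [hρrep]
    rw [hint_eq, real_master D hDmeas x ρ hρm hnn]
    set L := ∫⁻ s in Ioi (0:ℝ),
        ENNReal.ofReal s * ENNReal.ofReal (ρ s) * angF D x s with hL
    have hmeasint : Measurable fun s =>
        ENNReal.ofReal s * ENNReal.ofReal (ρ s) * angF D x s :=
      (ENNReal.measurable_ofReal.mul (ENNReal.measurable_ofReal.comp hρm)).mul hFm
    have h2L : 2 * L ≤ 1 := by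
      rw [hL, ← lintegral_const_mul 2 hmeasint, ← hN1, hN]
      apply lintegral_mono_ae
      have h1 : ∀ᵐ s ∂volume, s ∈ Set.Ioo 0 r → angF D x s ≤ ENNReal.ofReal π :=
        (ae_restrict_iff' measurableSet_Ioo).mp hae
      filter_upwards [ae_restrict_of_ae h1] with s hs
      by_cases hsr : s < r ∧ 0 < s
      · have hang := hs ⟨hsr.2, hsr.1⟩
        calc 2 * (ENNReal.ofReal s * ENNReal.ofReal (ρ s) * angF D x s)
            ≤ 2 * (ENNReal.ofReal s * ENNReal.ofReal (ρ s) * ENNReal.ofReal π) := by gcongr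
          _ = ENNReal.ofReal s * ENNReal.ofReal (ρ s) * (2 * ENNReal.ofReal π) := by ring
          _ = ENNReal.ofReal s * ENNReal.ofReal (ρ s) * ENNReal.ofReal (2*π) := by
              rw [ENNReal.ofReal_mul (by norm_num : (0:ℝ) ≤ 2)]
              norm_num
      · rcases not_and_or.mp hsr with hsr | hs0
        · have : ρ s = 0 := hvan s (not_lt.mp hsr)
          simp [this]
        · have : ENNReal.ofReal s = 0 := by
            rw [ENNReal.ofReal_eq_zero]; exact le_of_not_gt hs0
          simp [this]
    have hLhalf : L ≤ 1/2 := by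
      rw [ENNReal.le_div_iff_mul_le (Or.inl two_ne_zero) (Or.inl ENNReal.ofNat_ne_top), mul_comm]
      exact h2L
    calc L.toReal ≤ ((1:ENNReal)/2).toReal := ENNReal.toReal_mono (by norm_num) hLhalf
      _ = 1/2 := by norm_num
end
end
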